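/- Let k ≥ 2, let (A_1,…,A_k) be a Sperner-admissible partition of Δ_k with separating set S = ∪_{i≠j}(A_i ∩ A_j), let ε₀ = inf { x_i : i ∈ {1,…,k}, x ∈ A_i }, and fix ε with 0 < ε < ε₀/2. Set ε' = ε√2, A'_i = A_i \ S_ε where S_ε = { x ∈ Δ_k : dist(x, S) ≤ ε }, and A''_i = A'_i − ε'·e_i (the translate of A'_i by −ε' in the i-th coordinate direction). Then the sets A''_1, …, A''_k are pairwise disjoint, and each A''_i is contained in the scaled simplex (1−ε')·Δ_k = { x ∈ ℝ^k : x ≥ 0, Σ x_i = 1−ε' }. -/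
import Mathlib


open MeasureTheory

/-- For a Sperner-admissible partition `(A_1,…,A_k)` of `Δ_k` (`k ≥ 2`),
`ε₀ = inf {x_i : i ∈ [k], x ∈ A_i}`, `0 < ε < ε₀/2` and `ε' = ε√2`, the shifted sets
`A''_i = (A_i \ S_ε) − ε'·e_i` are pairwise disjoint and contained in the scaled
simplex `(1−ε')·Δ_k = {x ≥ 0 : Σ x_i = 1−ε'}`. -/
theorem shifted_sets_disjoint_in_scaled_simplex (k : ℕ) (hk : 2 ≤ k)
    (A : Fin k → Set (EuclideanSpace ℝ (Fin k)))
    (Δ : Set (EuclideanSpace ℝ (Fin k)))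
    (hΔ : Δ = {x : EuclideanSpace ℝ (Fin k) | (∀ i, 0 ≤ x i) ∧ ∑ i, x i = 1})
    (hclosed : ∀ i, IsClosed (A i))
    (hcover : (⋃ i, A i) = Δ)
    (hbd : ∀ i j, i ≠ j → A i ∩ A j ⊆ frontier (A i) ∩ frontier (A j))
    (hadm : ∀ i, ∀ x ∈ A i, 0 < x i)
    (ε₀ : ℝ) (hε₀ : ε₀ = sInf {r : ℝ | ∃ i : Fin k, ∃ x ∈ A i, r = x i})
    (ε : ℝ) (hε : 0 < ε) (hεsmall : ε < ε₀ / 2)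
    (S : Set (EuclideanSpace ℝ (Fin k))) (hS : S = ⋃ (i) (j) (_ : i ≠ j), A i ∩ A j)
    (A'' : Fin k → Set (EuclideanSpace ℝ (Fin k)))
    (hA'' : ∀ i, A'' i =
      (fun x => x - (ε * Real.sqrt 2) • EuclideanSpace.single i (1 : ℝ)) ''
        (A i \ {x ∈ Δ | Metric.infDist x S ≤ ε})) :
    (∀ i j, i ≠ j → Disjoint (A'' i) (A'' j)) ∧
    (∀ i, A'' i ⊆
      {x : EuclideanSpace ℝ (Fin k) | (∀ t, 0 ≤ x t) ∧ ∑ t, x t = 1 - ε * Real.sqrt 2}) := by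
  have hs2 : Real.sqrt 2 ≤ 2 := by
    nlinarith [Real.sq_sqrt (by norm_num : (0:ℝ) ≤ 2), Real.sqrt_nonneg 2]
  have hs2pos : 0 < Real.sqrt 2 := Real.sqrt_pos.mpr (by norm_num)
  set ε' : ℝ := ε * Real.sqrt 2 with hε'def
  have hε'pos : 0 < ε' := by positivity
  have hε'le : ε' ≤ 2 * ε := by nlinarith
  have hAsub : ∀ i, A i ⊆ Δ := fun i => hcover ▸ Set.subset_iUnion A i
  have hlow : ∀ i x, x ∈ A i → ε' < x i := by
    intro i x hx
    have h1 : ε₀ ≤ x i := by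
      rw [hε₀]
      exact csInf_le ⟨0, fun r ⟨j, y, hy, hr⟩ => hr ▸ (hadm j y hy).le⟩ ⟨i, x, hx, rfl⟩
    linarith
  -- coordinates of shifted point
  have happly : ∀ (x : EuclideanSpace ℝ (Fin k)) (i t : Fin k),
      (x - ε' • EuclideanSpace.single i (1:ℝ)) t
        = x t - ε' * (if t = i then 1 else 0) := by
    intro x i t
    simp [EuclideanSpace.single_apply]
  constructor
  · -- disjointness
    intro i j hij
    rw [Set.disjoint_left]
    rintro w hwi hwj
    rw [hA'' i] at hwi
    rw [hA'' j] at hwj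
    obtain ⟨x, ⟨hxA, hxS⟩, hxw⟩ := hwi
    obtain ⟨y, ⟨hyA, hyS⟩, hyw⟩ := hwj
    have hxΔ : x ∈ Δ := hAsub i hxA
    have hyΔ : y ∈ Δ := hAsub j hyA
    have hxdist : ε < Metric.infDist x S := by
      by_contra h
      exact hxS ⟨hxΔ, not_lt.mp h⟩
    have hydist : ε < Metric.infDist y S := by
      by_contra h
      exact hyS ⟨hyΔ, not_lt.mp h⟩
    -- x - y = ε' • (single i 1 - single j 1)
    have hxy : x - y = ε' • (EuclideanSpace.single i (1:ℝ) - EuclideanSpace.single j 1) := by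
      have h2 : x - ε' • EuclideanSpace.single i (1:ℝ)
          = y - ε' • EuclideanSpace.single j 1 := hxw.trans hyw.symm
      rw [smul_sub]
      linear_combination (norm := module) h2
    have hnorm : ‖EuclideanSpace.single i (1:ℝ) - EuclideanSpace.single j 1‖
        = Real.sqrt 2 := by
      rw [EuclideanSpace.norm_eq]
      congr 1
      have : ∀ t : Fin k,
          ‖(EuclideanSpace.single i (1:ℝ) - EuclideanSpace.single j 1 :
              EuclideanSpace ℝ (Fin k)) t‖ ^ 2
            = (if t = i then 1 else 0) + (if t = j then 1 else 0) := by
        intro t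
        simp only [PiLp.sub_apply, EuclideanSpace.single_apply]
        rcases eq_or_ne t i with rfl | hti <;> rcases eq_or_ne t j with rfl | htj
        · exact absurd rfl hij
        · simp [htj]
        · simp [hti]
        · simp [hti, htj]
      rw [Finset.sum_congr rfl (fun t _ => this t), Finset.sum_add_distrib]
      simp only [Finset.sum_ite_eq', Finset.mem_univ, if_true]
      norm_num
    have hdxy : dist x y = 2 * ε := by
      rw [dist_eq_norm, hxy, norm_smul, hnorm, Real.norm_of_nonneg hε'pos.le]
      rw [hε'def, mul_assoc, Real.mul_self_sqrt (by norm_num)]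
      ring
    -- find a point of S on the segment
    have hΔconv : Convex ℝ Δ := by
      rw [hΔ]
      intro a ha b hb p hp q hq hpq
      constructor
      · intro t
        have := ha.1 t
        have := hb.1 t
        simp only [PiLp.add_apply, PiLp.smul_apply, smul_eq_mul]
        positivity
      · simp only [PiLp.add_apply, PiLp.smul_apply, smul_eq_mul]
        rw [Finset.sum_add_distrib, ← Finset.mul_sum, ← Finset.mul_sum, ha.2, hb.2]
        simpa using hpq
    have hseg : segment ℝ x y ⊆ Δ := hΔconv.segment_subset hxΔ hyΔ
    set U : Set (EuclideanSpace ℝ (Fin k)) := ⋃ t ∈ {t : Fin k | t ≠ i}, A t with hU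
    have hUclosed : IsClosed U :=
      (Set.toFinite _).isClosed_biUnion (fun t _ => hclosed t)
    have hcov : segment ℝ x y ⊆ A i ∪ U := by
      intro z hz
      have hzΔ := hseg hz
      rw [← hcover] at hzΔ
      obtain ⟨t, ht⟩ := Set.mem_iUnion.mp hzΔ
      rcases eq_or_ne t i with rfl | hti
      · exact Or.inl ht
      · exact Or.inr (Set.mem_biUnion hti ht)
    obtain ⟨z, hzseg, hzi, hzU⟩ :=
      (isPreconnected_closed_iff.mp (convex_segment x y).isPreconnected)
        (A i) U (hclosed i) hUclosed hcov
        ⟨x, left_mem_segment ℝ x y, hxA⟩ ⟨y, right_mem_segment ℝ x y, Set.mem_biUnion (Ne.symm hij) hyA⟩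
    obtain ⟨t, hti, hzt⟩ := Set.mem_iUnion₂.mp hzU
    have hzS : z ∈ S := by
      rw [hS]
      exact Set.mem_iUnion.mpr ⟨i, Set.mem_iUnion.mpr ⟨t, Set.mem_iUnion.mpr
        ⟨Ne.symm hti, hzi, hzt⟩⟩⟩
    obtain ⟨a, b, ha, hb, hab, hz⟩ := hzseg
    have hdxz : dist x z = b * dist x y := by
      rw [dist_eq_norm, dist_eq_norm]
      have : x - z = b • (x - y) := by
        rw [← hz]
        rw [smul_sub]
        have : x = a • x + b • x := by
          rw [← add_smul, hab, one_smul]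
        nth_rewrite 1 [this]
        abel
      rw [this, norm_smul, Real.norm_of_nonneg hb]
    have hdyz : dist y z = a * dist x y := by
      rw [dist_eq_norm, dist_eq_norm]
      have h3 : y - z = a • (y - x) := by
        rw [← hz, smul_sub]
        have h4 : y = a • y + b • y := by
          rw [← add_smul, hab, one_smul]
        nth_rewrite 1 [h4]
        abel
      rw [h3, norm_smul, Real.norm_of_nonneg ha, norm_sub_rev]
    rcases le_or_gt b (1/2) with hble | hbgt
    · have : Metric.infDist x S ≤ ε := by
        calc Metric.infDist x S ≤ dist x z := Metric.infDist_le_dist_of_mem hzS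
        _ = b * (2 * ε) := by rw [hdxz, hdxy]
        _ ≤ ε := by nlinarith
      linarith
    · have hale : a ≤ 1/2 := by linarith
      have : Metric.infDist y S ≤ ε := by
        calc Metric.infDist y S ≤ dist y z := Metric.infDist_le_dist_of_mem hzS
        _ = a * (2 * ε) := by rw [hdyz, hdxy]
        _ ≤ ε := by nlinarith
      linarith
  · -- containment
    intro i w hw
    rw [hA'' i] at hw
    obtain ⟨x, ⟨hxA, _⟩, hxw⟩ := hw
    have hxΔ : x ∈ Δ := hAsub i hxA
    rw [hΔ] at hxΔ
    subst hxw
    constructor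
    · intro t
      show 0 ≤ (x - ε' • EuclideanSpace.single i (1:ℝ)) t
      rw [happly]
      by_cases hti : t = i
      · rw [if_pos hti, mul_one]
        subst hti
        have := hlow t x hxA
        linarith
      · rw [if_neg hti, mul_zero, sub_zero]
        exact hxΔ.1 t
    · show ∑ t, (x - ε' • EuclideanSpace.single i (1:ℝ)) t = 1 - ε'
      simp only [happly]
      rw [Finset.sum_sub_distrib, hxΔ.2, ← Finset.mul_sum]
      simp
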